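/- If n is a positive integer with KL(n) > 0, then h(n) ≥ 12/π². -/

import Mathlib

/-- `KL n = ∑_{d ∣ n} d · log (d / (2 φ(d)))`. -/
noncomputable def KL (n : ℕ) : ℝ :=
  ∑ d ∈ n.divisors, (d : ℝ) * Real.log ((d : ℝ) / (2 * (Nat.totient d : ℝ)))

/-- `h n = σ(n) / n`. -/
noncomputable def h (n : ℕ) : ℝ := ((∑ d ∈ n.divisors, d : ℕ) : ℝ) / (n : ℝ)

/-- Weierstrass inequality: `1 - ∑ x ≤ ∏ (1 - x)` for `0 ≤ x ≤ 1`. -/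
lemma one_sub_sum_le_prod_one_sub (s : Finset ℕ) (x : ℕ → ℝ) (hx : ∀ p ∈ s, 0 ≤ x p)
    (hx1 : ∀ p ∈ s, x p ≤ 1) : 1 - ∑ p ∈ s, x p ≤ ∏ p ∈ s, (1 - x p) := by
  induction s using Finset.induction_on with
  | empty => simp
  | @insert a s hns ih =>
    rw [Finset.sum_insert hns, Finset.prod_insert hns]
    have h1 : 1 - ∑ p ∈ s, x p ≤ ∏ p ∈ s, (1 - x p) :=
      ih (fun p hp => hx p (Finset.mem_insert_of_mem hp))
        (fun p hp => hx1 p (Finset.mem_insert_of_mem hp))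
    have ha0 : 0 ≤ x a := hx a (Finset.mem_insert_self a s)
    have ha1 : x a ≤ 1 := hx1 a (Finset.mem_insert_self a s)
    have hsum : (0:ℝ) ≤ ∑ p ∈ s, x p :=
      Finset.sum_nonneg fun p hp => hx p (Finset.mem_insert_of_mem hp)
    nlinarith [h1]

theorem h_ge_of_KL_pos (n : ℕ) (hn : 0 < n) (hKL : KL n > 0) :
    h n ≥ 12 / Real.pi ^ 2 := by
  have hn0 : (n : ℝ) ≠ 0 := Nat.cast_ne_zero.mpr hn.ne'
  -- h n is the sum of reciprocals of the divisors
  have hrecip : h n = ∑ e ∈ n.divisors, ((e : ℝ))⁻¹ := by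
    have hkey := Nat.sum_div_divisors n (fun e => ((e : ℝ)) / n)
    rw [h, Nat.cast_sum, Finset.sum_div, ← hkey]
    refine Finset.sum_congr rfl fun e he => ?_
    have hed : e ∣ n := (Nat.mem_divisors.mp he).1
    have he0 : e ≠ 0 := by
      rintro rfl; exact hn.ne' (Nat.eq_zero_of_zero_dvd hed)
    rw [Nat.cast_div hed (Nat.cast_ne_zero.mpr he0)]
    field_simp
  -- extract a divisor d with positive term
  obtain ⟨d, hd, hpos⟩ : ∃ d ∈ n.divisors,
      0 < (d : ℝ) * Real.log ((d : ℝ) / (2 * (Nat.totient d : ℝ))) := by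
    by_contra hc
    push_neg at hc
    exact absurd (Finset.sum_nonpos hc) (not_le.mpr hKL)
  have hdn : d ∣ n := (Nat.mem_divisors.mp hd).1
  have hd0 : 0 < d := Nat.pos_of_mem_divisors hd
  have hφ0 : 0 < Nat.totient d := Nat.totient_pos.mpr hd0
  have hdR : (0:ℝ) < d := by exact_mod_cast hd0
  have hφR : (0:ℝ) < 2 * (Nat.totient d : ℝ) := by
    have : (0:ℝ) < (Nat.totient d : ℝ) := by exact_mod_cast hφ0
    linarith
  -- from positivity of the term: 2 φ d < d
  have hlog : 0 < Real.log ((d : ℝ) / (2 * (Nat.totient d : ℝ))) := by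
    rcases mul_pos_iff.mp hpos with ⟨_, h2⟩ | ⟨h1, _⟩
    · exact h2
    · linarith
  have hratio : 1 < (d : ℝ) / (2 * (Nat.totient d : ℝ)) :=
    (Real.log_pos_iff (by positivity)).mp hlog
  have hineq : 2 * (Nat.totient d : ℝ) < (d : ℝ) := by
    rwa [lt_div_iff₀ hφR, one_mul] at hratio
  -- Euler product formula: φ d / d = ∏ (1 - 1/p)
  have hprod : (Nat.totient d : ℝ) = (d : ℝ) * ∏ p ∈ d.primeFactors, (1 - (p : ℝ)⁻¹) := by
    have hQ := Nat.totient_eq_mul_prod_factors d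
    have := congrArg (fun q : ℚ => (q : ℝ)) hQ
    push_cast at this
    exact_mod_cast this
  have hprodlt : ∏ p ∈ d.primeFactors, (1 - (p : ℝ)⁻¹) < 1/2 := by
    have : (d : ℝ) * ∏ p ∈ d.primeFactors, (1 - (p : ℝ)⁻¹) < (d : ℝ) * (1/2) := by
      rw [← hprod]; linarith
    exact lt_of_mul_lt_mul_left this hdR.le
  -- Weierstrass: ∑ 1/p > 1/2
  have hple : ∀ p ∈ d.primeFactors, (0:ℝ) ≤ (p : ℝ)⁻¹ := fun p hp => by positivity
  have hple1 : ∀ p ∈ d.primeFactors, ((p : ℝ))⁻¹ ≤ 1 := by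
    intro p hp
    have hp2 : 2 ≤ p := (Nat.prime_of_mem_primeFactors hp).two_le
    have : (1:ℝ) ≤ (p : ℝ) := by exact_mod_cast Nat.one_le_iff_ne_zero.mpr (by omega)
    rw [inv_le_one_iff₀]; right; exact this
  have hsumgt : 1/2 < ∑ p ∈ d.primeFactors, ((p : ℝ))⁻¹ := by
    have := one_sub_sum_le_prod_one_sub d.primeFactors (fun p => ((p : ℝ))⁻¹) hple hple1
    linarith
  -- insert 1 into the prime factors; all are divisors of n
  have hsub : insert 1 d.primeFactors ⊆ n.divisors := by
    intro p hp
    rcases Finset.mem_insert.mp hp with rfl | hp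
    · exact Nat.one_mem_divisors.mpr hn.ne'
    · exact Nat.mem_divisors.mpr ⟨(Nat.dvd_of_mem_primeFactors hp).trans hdn, hn.ne'⟩
  have h1notin : (1 : ℕ) ∉ d.primeFactors := by
    intro hmem
    exact (Nat.prime_of_mem_primeFactors hmem).one_lt.ne' rfl
  have hlb : 1 + ∑ p ∈ d.primeFactors, ((p : ℝ))⁻¹ ≤ h n := by
    rw [hrecip]
    calc 1 + ∑ p ∈ d.primeFactors, ((p : ℝ))⁻¹
        = ∑ e ∈ insert 1 d.primeFactors, ((e : ℝ))⁻¹ := by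
          rw [Finset.sum_insert h1notin]; norm_num
      _ ≤ ∑ e ∈ n.divisors, ((e : ℝ))⁻¹ :=
          Finset.sum_le_sum_of_subset_of_nonneg hsub (fun e he _ => by positivity)
  -- conclude: h n > 3/2 ≥ 12/π²
  have hpi : 3 < Real.pi := Real.pi_gt_three
  have hfinal : 12 / Real.pi ^ 2 ≤ 3/2 := by
    rw [div_le_iff₀ (by positivity)]
    nlinarith
  linarith
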